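/- Let m ≥ 2, β ∈ (1/m, 1), and let (γ_ℓ) ∈ {0,…,m−1}^ℕ be an infinite expansion of 1 in base β (i.e., Σ γ_ℓ β^ℓ = 1 with infinitely many nonzero terms). Then (γ_ℓ) is the quasi-greedy expansion of 1 if and only if for every k ≥ 1, the shifted sequence γ_{k+1} γ_{k+2} … is ≤ γ_1 γ_2 … in the lexicographical order. -/

import Mathlib

def LexLt (a b : ℕ → ℕ) : Prop := ∃ n, (∀ m < n, a m = b m) ∧ a n < b n

def LexLe (a b : ℕ → ℕ) : Prop := a = b ∨ LexLt a b

def IsExpansionOf1 (m : ℕ) (β : ℝ) (d : ℕ → ℕ) : Prop :=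
  (∀ n, d n < m) ∧ (∑' n, (d n : ℝ) * β ^ (n + 1)) = 1

def IsInfiniteExp (d : ℕ → ℕ) : Prop := ∀ n, ∃ k ≥ n, d k ≠ 0

def IsQuasiGreedy (m : ℕ) (β : ℝ) (d : ℕ → ℕ) : Prop :=
  IsExpansionOf1 m β d ∧ IsInfiniteExp d ∧
    ∀ e, IsExpansionOf1 m β e → IsInfiniteExp e → LexLe e d

noncomputable def V (β : ℝ) (d : ℕ → ℕ) : ℝ := ∑' n, (d n : ℝ) * β ^ (n + 1)

section Lemmas

variable {m : ℕ} {β : ℝ} {d : ℕ → ℕ}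

lemma summable_aux (hβ0 : 0 ≤ β) (hβ1 : β < 1) (hd : ∀ n, d n < m) :
    Summable (fun n => (d n : ℝ) * β ^ (n + 1)) := by
  have hg : Summable (fun n : ℕ => (m : ℝ) * β ^ (n + 1)) :=
    ((summable_geometric_of_lt_one hβ0 hβ1).mul_left ((m : ℝ) * β)).congr
      (fun n => by rw [pow_succ]; ring)
  refine Summable.of_nonneg_of_le (fun n => by positivity) (fun n => ?_) hg
  exact mul_le_mul_of_nonneg_right (by exact_mod_cast (hd n).le) (by positivity)

lemma V_nonneg (hβ0 : 0 ≤ β) : 0 ≤ V β d :=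
  tsum_nonneg (fun n => by positivity)

lemma V_pos (hβ0 : 0 < β) (hβ1 : β < 1) (hd : ∀ n, d n < m) (h : ∃ k, d k ≠ 0) :
    0 < V β d := by
  obtain ⟨k, hk⟩ := h
  have hs := summable_aux hβ0.le hβ1 hd
  have hle := Summable.le_tsum hs k (fun j _ => by positivity)
  have hterm : 0 < (d k : ℝ) * β ^ (k + 1) := by
    have : (0:ℝ) < d k := by exact_mod_cast Nat.pos_of_ne_zero hk
    positivity
  exact lt_of_lt_of_le hterm hle

lemma V_le (hβ0 : 0 ≤ β) (hβ1 : β < 1) (hd : ∀ n, d n < m) :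
    V β d ≤ (m : ℝ) * β * (1 - β)⁻¹ := by
  have hg : Summable (fun n : ℕ => ((m : ℝ) * β) * β ^ n) :=
    (summable_geometric_of_lt_one hβ0 hβ1).mul_left _
  have h1 : V β d ≤ ∑' n : ℕ, ((m : ℝ) * β) * β ^ n := by
    refine Summable.tsum_le_tsum (fun n => ?_) (summable_aux hβ0 hβ1 hd) hg
    rw [pow_succ]
    calc (d n : ℝ) * (β ^ n * β) ≤ (m : ℝ) * (β ^ n * β) :=
          mul_le_mul_of_nonneg_right (by exact_mod_cast (hd n).le) (by positivity)
      _ = (m : ℝ) * β * β ^ n := by ring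
  calc V β d ≤ ∑' n : ℕ, ((m : ℝ) * β) * β ^ n := h1
    _ = (m : ℝ) * β * (1 - β)⁻¹ := by
        rw [tsum_mul_left, tsum_geometric_of_lt_one hβ0 hβ1]

lemma V_split (hβ0 : 0 ≤ β) (hβ1 : β < 1) (hd : ∀ n, d n < m) (k : ℕ) :
    V β d = (∑ i ∈ Finset.range k, (d i : ℝ) * β ^ (i + 1))
      + β ^ k * V β (fun n => d (n + k)) := by
  have hs := summable_aux hβ0 hβ1 hd
  have h := (Summable.sum_add_tsum_nat_add k hs).symm
  rw [V, h]
  congr 1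
  rw [V, ← tsum_mul_left]
  apply tsum_congr; intro n
  rw [show n + k + 1 = k + (n + 1) by omega, pow_add]; ring

end Lemmas
lemma lex_trichotomy (a b : ℕ → ℕ) : LexLe a b ∨ LexLt b a := by
  by_cases h : a = b
  · exact Or.inl (Or.inl h)
  · have hne : ∃ n, a n ≠ b n := Function.ne_iff.mp h
    have h1 := Nat.find_spec hne
    have h2 : ∀ j < Nat.find hne, a j = b j := fun j hj => not_not.mp (Nat.find_min hne hj)
    rcases Nat.lt_or_ge (a (Nat.find hne)) (b (Nat.find hne)) with h3 | h3
    · exact Or.inl (Or.inr ⟨_, h2, h3⟩)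
    · exact Or.inr ⟨_, fun j hj => (h2 j hj).symm, by omega⟩

lemma lexle_antisymm {a b : ℕ → ℕ} (h1 : LexLe a b) (h2 : LexLe b a) : a = b := by
  rcases h1 with h1 | ⟨n, hn, hna⟩
  · exact h1
  rcases h2 with h2 | ⟨n', hn', hnb⟩
  · exact h2.symm
  exfalso
  rcases lt_trichotomy n n' with h | h | h
  · have := hn' n h; omega
  · subst h; omega
  · have := hn n' h; omega

noncomputable def qdig (m : ℕ) (β : ℝ) (x : ℝ) : ℕ := min (m - 1) (⌈x / β⌉₊ - 1)

noncomputable def qrem (m : ℕ) (β : ℝ) : ℕ → ℝ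
  | 0 => 1
  | n + 1 => qrem m β n / β - (qdig m β (qrem m β n) : ℝ)

section QG

variable {m : ℕ} {β : ℝ}

lemma qdig_lt (hm : 2 ≤ m) (x : ℝ) : qdig m β x < m :=
  lt_of_le_of_lt (min_le_left _ _) (by omega)

lemma qdig_mul_lt (hβ0 : 0 < β) {x : ℝ} (hx : 0 < x) : (qdig m β x : ℝ) * β < x := by
  have hy : 0 < x / β := div_pos hx hβ0
  have h1 : 1 ≤ ⌈x / β⌉₊ := Nat.ceil_pos.mpr hy
  have hlt : ((⌈x / β⌉₊ - 1 : ℕ) : ℝ) < x / β := by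
    rw [Nat.cast_sub h1]
    have := Nat.ceil_lt_add_one hy.le
    push_cast
    linarith
  have h2 : ((qdig m β x : ℕ) : ℝ) ≤ ((⌈x / β⌉₊ - 1 : ℕ) : ℝ) := by
    exact_mod_cast min_le_right (m - 1) (⌈x / β⌉₊ - 1)
  rw [← lt_div_iff₀ hβ0]
  exact lt_of_le_of_lt h2 hlt

lemma qrem_bounds (hm : 2 ≤ m) (hβ0 : 0 < β) (hβ1 : β < 1) (hβm : 1 < (m : ℝ) * β) :
    ∀ n, 0 < qrem m β n ∧ qrem m β n ≤ 1 := by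
  intro n
  induction n with
  | zero => simp [qrem]
  | succ n ih =>
    obtain ⟨h0, h1⟩ := ih
    have hdig : (qdig m β (qrem m β n) : ℝ) * β < qrem m β n := qdig_mul_lt hβ0 h0
    constructor
    · show 0 < qrem m β n / β - (qdig m β (qrem m β n) : ℝ)
      rw [sub_pos, lt_div_iff₀ hβ0]
      exact hdig
    · show qrem m β n / β - (qdig m β (qrem m β n) : ℝ) ≤ 1
      rcases le_or_gt (⌈qrem m β n / β⌉₊ - 1) (m - 1) with hc | hc
      · have hq : qdig m β (qrem m β n) = ⌈qrem m β n / β⌉₊ - 1 := min_eq_right hc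
        have h1' : 1 ≤ ⌈qrem m β n / β⌉₊ := Nat.ceil_pos.mpr (div_pos h0 hβ0)
        have hle : qrem m β n / β ≤ (⌈qrem m β n / β⌉₊ : ℝ) := Nat.le_ceil _
        have hcast : ((⌈qrem m β n / β⌉₊ - 1 : ℕ) : ℝ) = (⌈qrem m β n / β⌉₊ : ℝ) - 1 := by
          rw [Nat.cast_sub h1']; simp
        rw [hq, hcast]
        linarith
      · have hq : qdig m β (qrem m β n) = m - 1 := min_eq_left hc.le
        have hcast : ((m - 1 : ℕ) : ℝ) = (m : ℝ) - 1 := by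
          rw [Nat.cast_sub (by omega)]; simp
        rw [hq, hcast, sub_le_iff_le_add, div_le_iff₀ hβ0]
        nlinarith

lemma qsum (hβ0 : 0 < β) :
    ∀ n, (∑ i ∈ Finset.range n, (qdig m β (qrem m β i) : ℝ) * β ^ (i + 1))
      = 1 - β ^ n * qrem m β n := by
  intro n
  induction n with
  | zero => simp [qrem]
  | succ n ih =>
    rw [Finset.sum_range_succ, ih]
    have : qrem m β (n + 1) = qrem m β n / β - (qdig m β (qrem m β n) : ℝ) := rfl
    rw [this]
    field_simp
    ring

end QG
section Main

variable {m : ℕ} {β : ℝ}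

lemma shift_exists_ne {γ : ℕ → ℕ} (hinf : IsInfiniteExp γ) (k : ℕ) :
    ∃ j, γ (j + k) ≠ 0 := by
  obtain ⟨l, hl, hl0⟩ := hinf k
  exact ⟨l - k, by rwa [Nat.sub_add_cancel hl]⟩

/-- L3: tails ≤ 1 implies lex-maximality among infinite expansions. -/
lemma max_of_tails (hβ0 : 0 < β) (hβ1 : β < 1) {γ : ℕ → ℕ}
    (hexp : IsExpansionOf1 m β γ)
    (htail : ∀ k, V β (fun n => γ (n + k)) ≤ 1) :
    ∀ e, IsExpansionOf1 m β e → IsInfiniteExp e → LexLe e γ := by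
  intro e he hei
  rcases lex_trichotomy e γ with h | h
  · exact h
  exfalso
  obtain ⟨n, hagree, hlt⟩ := h
  have hVγ : V β γ = 1 := hexp.2
  have hVe : V β e = 1 := he.2
  have h1 : V β γ = (∑ i ∈ Finset.range (n + 1), (γ i : ℝ) * β ^ (i + 1))
      + β ^ (n + 1) * V β (fun j => γ (j + (n + 1))) := V_split hβ0.le hβ1 hexp.1 (n + 1)
  have h2 : V β e = (∑ i ∈ Finset.range (n + 1), (e i : ℝ) * β ^ (i + 1))
      + β ^ (n + 1) * V β (fun j => e (j + (n + 1))) := V_split hβ0.le hβ1 he.1 (n + 1)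
  rw [hVγ, Finset.sum_range_succ] at h1
  rw [hVe, Finset.sum_range_succ] at h2
  have hpre : (∑ i ∈ Finset.range n, (γ i : ℝ) * β ^ (i + 1))
      = ∑ i ∈ Finset.range n, (e i : ℝ) * β ^ (i + 1) :=
    Finset.sum_congr rfl (fun i hi => by rw [hagree i (Finset.mem_range.mp hi)])
  have hA1 : V β (fun j => γ (j + (n + 1))) ≤ 1 := htail (n + 1)
  have hBpos : 0 < V β (fun j => e (j + (n + 1))) :=
    V_pos hβ0 hβ1 (fun j => he.1 _) (shift_exists_ne hei (n + 1))
  have hcast : (γ n : ℝ) + 1 ≤ (e n : ℝ) := by exact_mod_cast hlt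
  have hpow : (0:ℝ) < β ^ (n + 1) := pow_pos hβ0 _
  nlinarith [mul_pos hpow hBpos, mul_nonneg hpow.le (sub_nonneg.mpr hA1),
    mul_nonneg hpow.le (by linarith : (0:ℝ) ≤ (e n : ℝ) - (γ n : ℝ) - 1)]

/-- L1: tails ≤ 1 implies the shift condition. -/
lemma shift_of_tails (hβ0 : 0 < β) (hβ1 : β < 1) {γ : ℕ → ℕ}
    (hexp : IsExpansionOf1 m β γ) (hinf : IsInfiniteExp γ)
    (htail : ∀ k, V β (fun n => γ (n + k)) ≤ 1) :
    ∀ k, 1 ≤ k → LexLe (fun n => γ (n + k)) γ := by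
  intro k _
  rcases lex_trichotomy (fun n => γ (n + k)) γ with h | h
  · exact h
  exfalso
  obtain ⟨n, hagree, hlt⟩ := h
  have hagree' : ∀ i < n, γ (i + k) = γ i := fun i hi => (hagree i hi).symm
  have hlt' : γ n < γ (n + k) := hlt
  have hVγ : V β γ = 1 := hexp.2
  have h1 : V β γ = (∑ i ∈ Finset.range (n + 1), (γ i : ℝ) * β ^ (i + 1))
      + β ^ (n + 1) * V β (fun j => γ (j + (n + 1))) := V_split hβ0.le hβ1 hexp.1 (n + 1)
  have h2 : V β (fun n' => γ (n' + k))
      = (∑ i ∈ Finset.range (n + 1), (γ (i + k) : ℝ) * β ^ (i + 1))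
      + β ^ (n + 1) * V β (fun j => γ (j + (n + 1) + k)) :=
    V_split hβ0.le hβ1 (fun j => hexp.1 _) (n + 1)
  rw [hVγ, Finset.sum_range_succ] at h1
  rw [Finset.sum_range_succ] at h2
  have hpre : (∑ i ∈ Finset.range n, (γ (i + k) : ℝ) * β ^ (i + 1))
      = ∑ i ∈ Finset.range n, (γ i : ℝ) * β ^ (i + 1) :=
    Finset.sum_congr rfl (fun i hi => by rw [hagree' i (Finset.mem_range.mp hi)])
  have hA1 : V β (fun j => γ (j + (n + 1))) ≤ 1 := htail (n + 1)
  have hBpos : 0 < V β (fun j => γ (j + (n + 1) + k)) := by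
    have heq : (fun j => γ (j + (n + 1) + k)) = (fun j => γ (j + (n + 1 + k))) := by
      funext j; congr 1; omega
    rw [heq]
    exact V_pos hβ0 hβ1 (fun j => hexp.1 _) (shift_exists_ne hinf (n + 1 + k))
  have hTk : V β (fun n' => γ (n' + k)) ≤ 1 := htail k
  have hcast : (γ n : ℝ) + 1 ≤ (γ (n + k) : ℝ) := by exact_mod_cast hlt'
  have hpow : (0:ℝ) < β ^ (n + 1) := pow_pos hβ0 _
  nlinarith [mul_pos hpow hBpos, mul_nonneg hpow.le (sub_nonneg.mpr hA1),
    mul_nonneg hpow.le (by linarith : (0:ℝ) ≤ (γ (n + k) : ℝ) - (γ n : ℝ) - 1)]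

/-- L2: the shift condition implies tails ≤ 1. -/
lemma tails_of_shift (hβ0 : 0 < β) (hβ1 : β < 1) {γ : ℕ → ℕ}
    (hexp : IsExpansionOf1 m β γ)
    (hshift : ∀ k, 1 ≤ k → LexLe (fun n => γ (n + k)) γ) :
    ∀ k, V β (fun n => γ (n + k)) ≤ 1 := by
  set T : ℕ → ℝ := fun k => V β (fun n => γ (n + k)) with hTdef
  have hTbdd : BddAbove (Set.range T) := by
    refine ⟨(m : ℝ) * β * (1 - β)⁻¹, ?_⟩
    rintro x ⟨k, rfl⟩
    exact V_le hβ0.le hβ1 (fun j => hexp.1 _)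
  have hT0 : T 0 = 1 := by
    have hfun : (fun n => γ (n + 0)) = γ := by funext n; simp
    show V β (fun n => γ (n + 0)) = 1
    rw [hfun]; exact hexp.2
  have hS1 : 1 ≤ ⨆ k, T k := hT0 ▸ le_ciSup hTbdd 0
  set S := ⨆ k, T k with hSdef
  have key : ∀ k, T k ≤ 1 + β * (S - 1) := by
    intro k
    rcases Nat.eq_zero_or_pos k with rfl | hk
    · rw [hT0]; nlinarith
    rcases hshift k hk with heq | hlex
    · have hTk : T k = 1 := by
        show V β (fun n => γ (n + k)) = 1
        rw [heq]; exact hexp.2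
      rw [hTk]; nlinarith
    · obtain ⟨n, hagree, hlt⟩ := hlex
      have hagree' : ∀ i < n, γ (i + k) = γ i := fun i hi => hagree i hi
      have hlt' : γ (n + k) < γ n := hlt
      have hVγ : V β γ = 1 := hexp.2
      have h1 : V β γ = (∑ i ∈ Finset.range (n + 1), (γ i : ℝ) * β ^ (i + 1))
          + β ^ (n + 1) * V β (fun j => γ (j + (n + 1))) := V_split hβ0.le hβ1 hexp.1 (n + 1)
      have h2 : V β (fun n' => γ (n' + k))
          = (∑ i ∈ Finset.range (n + 1), (γ (i + k) : ℝ) * β ^ (i + 1))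
          + β ^ (n + 1) * V β (fun j => γ (j + (n + 1) + k)) :=
        V_split hβ0.le hβ1 (fun j => hexp.1 _) (n + 1)
      rw [hVγ, Finset.sum_range_succ] at h1
      rw [Finset.sum_range_succ] at h2
      have hpre : (∑ i ∈ Finset.range n, (γ (i + k) : ℝ) * β ^ (i + 1))
          = ∑ i ∈ Finset.range n, (γ i : ℝ) * β ^ (i + 1) :=
        Finset.sum_congr rfl (fun i hi => by rw [hagree' i (Finset.mem_range.mp hi)])
      have hub : V β (fun j => γ (j + (n + 1) + k)) ≤ S := by
        have heq : (fun j => γ (j + (n + 1) + k)) = (fun j => γ (j + (n + 1 + k))) := by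
          funext j; congr 1; omega
        rw [heq]
        exact le_ciSup hTbdd (n + 1 + k)
      have hlb : 0 ≤ V β (fun j => γ (j + (n + 1))) := V_nonneg hβ0.le
      have hpow1 : β ^ (n + 1) ≤ β := by
        calc β ^ (n + 1) ≤ β ^ 1 := pow_le_pow_of_le_one hβ0.le hβ1.le (by omega)
          _ = β := pow_one β
      have hcast : (γ (n + k) : ℝ) + 1 ≤ (γ n : ℝ) := by exact_mod_cast hlt'
      have hpow : (0:ℝ) < β ^ (n + 1) := pow_pos hβ0 _
      have e1 : T k ≤ 1 + β ^ (n + 1) * (S - 1) := by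
        have hTk : T k = V β (fun n' => γ (n' + k)) := rfl
        rw [hTk]
        nlinarith [mul_nonneg hpow.le (sub_nonneg.mpr hub), mul_nonneg hpow.le hlb,
          mul_nonneg hpow.le (by linarith : (0:ℝ) ≤ (γ n : ℝ) - (γ (n + k) : ℝ) - 1)]
      have e2 : β ^ (n + 1) * (S - 1) ≤ β * (S - 1) :=
        mul_le_mul_of_nonneg_right hpow1 (by linarith)
      linarith
  have hSle : S ≤ 1 + β * (S - 1) := ciSup_le key
  have hS : S ≤ 1 := by nlinarith
  intro k
  exact le_trans (le_ciSup hTbdd k) hS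

end Main
section Construction

variable {m : ℕ} {β : ℝ}

lemma qexp_props (hm : 2 ≤ m) (hβ0 : 0 < β) (hβ1 : β < 1) (hβm : 1 < (m : ℝ) * β) :
    IsExpansionOf1 m β (fun n => qdig m β (qrem m β n)) ∧
      IsInfiniteExp (fun n => qdig m β (qrem m β n)) ∧
      ∀ k, V β (fun n => qdig m β (qrem m β (n + k))) ≤ 1 := by
  have hδd : ∀ n, qdig m β (qrem m β n) < m := fun n => qdig_lt hm _
  have hs := summable_aux hβ0.le hβ1 hδd
  have hr := qrem_bounds hm hβ0 hβ1 hβm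
  have hps := qsum (m := m) hβ0
  have hlim0 : Filter.Tendsto (fun n => β ^ n * qrem m β n) Filter.atTop (nhds 0) := by
    apply squeeze_zero (fun n => mul_nonneg (pow_nonneg hβ0.le n) (hr n).1.le)
      (fun n => ?_) (tendsto_pow_atTop_nhds_zero_of_lt_one hβ0.le hβ1)
    calc β ^ n * qrem m β n ≤ β ^ n * 1 :=
          mul_le_mul_of_nonneg_left (hr n).2 (pow_nonneg hβ0.le n)
      _ = β ^ n := mul_one _
  have hlim : Filter.Tendsto
      (fun n => ∑ i ∈ Finset.range n, (qdig m β (qrem m β i) : ℝ) * β ^ (i + 1))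
      Filter.atTop (nhds 1) := by
    simp only [hps]
    have := Filter.Tendsto.const_sub (1:ℝ) hlim0
    simpa using this
  have hV1 : V β (fun n => qdig m β (qrem m β n)) = 1 :=
    tendsto_nhds_unique hs.hasSum.tendsto_sum_nat hlim
  have htail : ∀ k, V β (fun n => qdig m β (qrem m β (n + k))) = qrem m β k := by
    intro k
    have h : V β (fun n => qdig m β (qrem m β n))
        = (∑ i ∈ Finset.range k, (qdig m β (qrem m β i) : ℝ) * β ^ (i + 1))
        + β ^ k * V β (fun n => qdig m β (qrem m β (n + k))) :=
      V_split hβ0.le hβ1 hδd k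
    rw [hV1, hps k] at h
    have hbk : (0:ℝ) < β ^ k := pow_pos hβ0 k
    have h2 : β ^ k * V β (fun n => qdig m β (qrem m β (n + k)))
        = β ^ k * qrem m β k := by linarith
    exact mul_left_cancel₀ hbk.ne' h2
  refine ⟨⟨hδd, hV1⟩, ?_, fun k => (htail k).le.trans (hr k).2⟩
  intro n
  by_contra hcon
  push_neg at hcon
  have hz : ∀ j : ℕ, ((qdig m β (qrem m β (j + n)) : ℕ) : ℝ) * β ^ (j + 1) = 0 := fun j => by
    rw [hcon (j + n) (Nat.le_add_left n j)]; simp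
  have h0 : V β (fun j => qdig m β (qrem m β (j + n))) = 0 := (tsum_congr hz).trans tsum_zero
  have := htail n
  have := (hr n).1
  linarith

/-- L4: lex-maximality implies tails ≤ 1. -/
lemma tails_of_max (hm : 2 ≤ m) (hβ0 : 0 < β) (hβ1 : β < 1) (hβm : 1 < (m : ℝ) * β)
    {γ : ℕ → ℕ} (hexp : IsExpansionOf1 m β γ) (hinf : IsInfiniteExp γ)
    (hmax : ∀ e, IsExpansionOf1 m β e → IsInfiniteExp e → LexLe e γ) :
    ∀ k, V β (fun n => γ (n + k)) ≤ 1 := by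
  obtain ⟨hδexp, hδinf, hδtail⟩ := qexp_props hm hβ0 hβ1 hβm
  have hδmax := max_of_tails hβ0 hβ1 hδexp hδtail
  have h1 := hmax _ hδexp hδinf
  have h2 := hδmax γ hexp hinf
  have hγδ : γ = fun n => qdig m β (qrem m β n) := lexle_antisymm h2 h1
  intro k
  rw [hγδ]
  exact hδtail k

end Construction

/-- an infinite expansion (γ_ℓ) of 1 is quasi-greedy iff all its
shifts are lexicographically ≤ the sequence itself. -/
theorem stmt10 (m : ℕ) (hm : 2 ≤ m) (β : ℝ) (hβ1 : 1 / (m : ℝ) < β) (hβ2 : β < 1)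
    (γ : ℕ → ℕ) (hexp : IsExpansionOf1 m β γ) (hinf : IsInfiniteExp γ) :
    IsQuasiGreedy m β γ ↔ ∀ k, 1 ≤ k → LexLe (fun n => γ (n + k)) γ := by
  have hm0 : (0:ℝ) < (m : ℝ) := by exact_mod_cast (by omega : 0 < m)
  have hβ0 : 0 < β := lt_trans (by positivity) hβ1
  have hβm : 1 < (m : ℝ) * β := by
    rw [div_lt_iff₀ hm0] at hβ1
    linarith [hβ1]
  constructor
  · rintro ⟨_, _, hmax⟩
    exact shift_of_tails hβ0 hβ2 hexp hinf (tails_of_max hm hβ0 hβ2 hβm hexp hinf hmax)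
  · intro h
    exact ⟨hexp, hinf, max_of_tails hβ0 hβ2 hexp (tails_of_shift hβ0 hβ2 hexp h)⟩
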